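/- Define w(x) = (28/19)x plus a bonus: 25124/77805 if x > 1/2, 6528/77805 if 1/3 < x ≤ 1/2, 5520/77805 if 1/4 < x ≤ 1/3, 1008/77805 if 1/6 < x ≤ 1/4, and 0 if 0 ≤ x ≤ 1/6. Then for any finite multiset B of reals in [0,1] with total sum at most 1, the total weight ∑_{x∈B} w(x) is at most 146312/77805. -/
import Mathlib

noncomputable def w2 (x : ℝ) : ℝ :=
  28/19 * x +
    if x > 1/2 then 25124/77805
    else if x > 1/3 then 6528/77805
    else if x > 1/4 then 5520/77805
    else if x > 1/6 then 1008/77805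
    else 0

noncomputable def step4 (v1 v2 v3 v4 : ℝ) (x : ℝ) : ℝ :=
  if x > 1/2 then v1
  else if x > 1/3 then v2
  else if x > 1/4 then v3
  else if x > 1/6 then v4
  else 0

lemma w2_eq (x : ℝ) : w2 x = 28/19 * x + step4 (25124/77805) (6528/77805) (5520/77805) (1008/77805) x := rfl

open Classical in
lemma step4_sum (v1 v2 v3 v4 : ℝ) (B : Multiset ℝ) :
    (B.map (step4 v1 v2 v3 v4)).sum
      = v1 * (B.countP (fun x => 1/2 < x))
      + v2 * (B.countP (fun x => 1/3 < x ∧ x ≤ 1/2))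
      + v3 * (B.countP (fun x => 1/4 < x ∧ x ≤ 1/3))
      + v4 * (B.countP (fun x => 1/6 < x ∧ x ≤ 1/4)) := by
  induction B using Multiset.induction_on with
  | empty => simp
  | cons a s ih =>
      rw [Multiset.map_cons, Multiset.sum_cons, ih]
      rcases lt_or_ge (1/2 : ℝ) a with h1 | h1
      · rw [Multiset.countP_cons_of_pos _ h1,
          Multiset.countP_cons_of_neg _ (fun h => absurd h.2 (not_le.mpr h1)),
          Multiset.countP_cons_of_neg _ (fun h => absurd h.2 (not_le.mpr (by linarith))),
          Multiset.countP_cons_of_neg _ (fun h => absurd h.2 (not_le.mpr (by linarith)))]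
        rw [step4, if_pos h1]
        push_cast; ring
      · rcases lt_or_ge (1/3 : ℝ) a with h2 | h2
        · rw [Multiset.countP_cons_of_neg _ (not_lt.mpr h1),
            Multiset.countP_cons_of_pos _ ⟨h2, h1⟩,
            Multiset.countP_cons_of_neg _ (fun h => absurd h.2 (not_le.mpr h2)),
            Multiset.countP_cons_of_neg _ (fun h => absurd h.2 (not_le.mpr (by linarith)))]
          rw [step4, if_neg (not_lt.mpr h1), if_pos h2]
          push_cast; ring
        · rcases lt_or_ge (1/4 : ℝ) a with h3 | h3
          · rw [Multiset.countP_cons_of_neg _ (not_lt.mpr h1),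
              Multiset.countP_cons_of_neg _ (fun h => absurd h.1 (not_lt.mpr h2)),
              Multiset.countP_cons_of_pos _ ⟨h3, h2⟩,
              Multiset.countP_cons_of_neg _ (fun h => absurd h.2 (not_le.mpr h3))]
            rw [step4, if_neg (not_lt.mpr h1), if_neg (not_lt.mpr h2), if_pos h3]
            push_cast; ring
          · rcases lt_or_ge (1/6 : ℝ) a with h4 | h4
            · rw [Multiset.countP_cons_of_neg _ (not_lt.mpr h1),
                Multiset.countP_cons_of_neg _ (fun h => absurd h.1 (not_lt.mpr h2)),
                Multiset.countP_cons_of_neg _ (fun h => absurd h.1 (not_lt.mpr h3)),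
                Multiset.countP_cons_of_pos _ ⟨h4, h3⟩]
              rw [step4, if_neg (not_lt.mpr h1), if_neg (not_lt.mpr h2), if_neg (not_lt.mpr h3),
                if_pos h4]
              push_cast; ring
            · rw [Multiset.countP_cons_of_neg _ (not_lt.mpr h1),
                Multiset.countP_cons_of_neg _ (fun h => absurd h.1 (not_lt.mpr h2)),
                Multiset.countP_cons_of_neg _ (fun h => absurd h.1 (not_lt.mpr h3)),
                Multiset.countP_cons_of_neg _ (fun h => absurd h.1 (not_lt.mpr h4))]
              rw [step4, if_neg (not_lt.mpr h1), if_neg (not_lt.mpr h2), if_neg (not_lt.mpr h3),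
                if_neg (not_lt.mpr h4)]
              push_cast; ring

lemma sum_map_linadd (c : ℝ) (f : ℝ → ℝ) (B : Multiset ℝ) :
    (B.map fun x => c * x + f x).sum = c * B.sum + (B.map f).sum := by
  induction B using Multiset.induction_on with
  | empty => simp
  | cons a s ih =>
      simp only [Multiset.map_cons, Multiset.sum_cons, ih]
      ring

lemma step4_le {x : ℝ} (hx : 0 ≤ x) : step4 (1/2) (1/3) (1/4) (1/6) x ≤ x := by
  unfold step4; split_ifs <;> linarith

lemma step4_lt {x : ℝ} (hx : 1/6 < x) : step4 (1/2) (1/3) (1/4) (1/6) x < x := by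
  unfold step4; split_ifs <;> linarith

lemma sum_map_le_self (B : Multiset ℝ) (f : ℝ → ℝ) (h : ∀ x ∈ B, f x ≤ x) :
    (B.map f).sum ≤ B.sum := by
  induction B using Multiset.induction_on with
  | empty => simp
  | cons a s ih =>
      simp only [Multiset.map_cons, Multiset.sum_cons]
      have h1 := h a (Multiset.mem_cons_self a s)
      have h2 := ih (fun x hx => h x (Multiset.mem_cons_of_mem hx))
      linarith

theorem stmt2 (B : Multiset ℝ) (hB : ∀ x ∈ B, 0 ≤ x ∧ x ≤ 1)
    (hsum : B.sum ≤ 1) : (B.map w2).sum ≤ 146312/77805 := by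
  classical
  set a : ℕ := B.countP (fun x => 1/2 < x) with ha
  set b : ℕ := B.countP (fun x => 1/3 < x ∧ x ≤ 1/2) with hb
  set c : ℕ := B.countP (fun x => 1/4 < x ∧ x ≤ 1/3) with hc
  set d : ℕ := B.countP (fun x => 1/6 < x ∧ x ≤ 1/4) with hd
  have hW : (B.map w2).sum = 28/19 * B.sum
      + (25124/77805 * a + 6528/77805 * b + 5520/77805 * c + 1008/77805 * d) := by
    have : (B.map w2).sum = (B.map fun x =>
        28/19 * x + step4 (25124/77805) (6528/77805) (5520/77805) (1008/77805) x).sum := by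
      rfl
    rw [this, sum_map_linadd]
    try rw [step4_sum]
    try ring
  have hLsum : (B.map (step4 (1/2) (1/3) (1/4) (1/6))).sum
      = 1/2 * a + 1/3 * b + 1/4 * c + 1/6 * d := by
    rw [step4_sum]
    try ring
  by_cases hex : ∃ y ∈ B, 1/6 < y
  · obtain ⟨y, hyB, hy⟩ := hex
    obtain ⟨C, rfl⟩ := Multiset.exists_cons_of_mem hyB
    have hstrict : ((y ::ₘ C).map (step4 (1/2) (1/3) (1/4) (1/6))).sum < (y ::ₘ C).sum := by
      simp only [Multiset.map_cons, Multiset.sum_cons]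
      have h1 : step4 (1/2) (1/3) (1/4) (1/6) y < y := step4_lt hy
      have h2 : (C.map (step4 (1/2) (1/3) (1/4) (1/6))).sum ≤ C.sum :=
        sum_map_le_self _ _ (fun x hx => step4_le (hB x (Multiset.mem_cons_of_mem hx)).1)
      linarith
    have hL1 : (1/2 : ℝ) * a + 1/3 * b + 1/4 * c + 1/6 * d < 1 := by
      rw [← hLsum]; linarith
    have hnat : 6 * a + 4 * b + 3 * c + 2 * d < 12 := by
      have h12 : ((6 * a + 4 * b + 3 * c + 2 * d : ℕ) : ℝ) < ((12 : ℕ) : ℝ) := by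
        push_cast; linarith
      exact_mod_cast h12
    have hbonus : 25124 * a + 6528 * b + 5520 * c + 1008 * d ≤ 31652 := by
      have h1 : a ≤ 1 := by omega
      have h2 : b ≤ 2 := by omega
      have h3 : c ≤ 3 := by omega
      have h4 : d ≤ 5 := by omega
      interval_cases a <;> interval_cases b <;> interval_cases c <;> interval_cases d <;> omega
    have hbonusR : (25124 : ℝ) * a + 6528 * b + 5520 * c + 1008 * d ≤ 31652 := by
      exact_mod_cast hbonus
    rw [hW]
    linarith
  · push_neg at hex
    have ha0 : a = 0 := by
      rw [ha]; rw [Multiset.countP_eq_zero]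
      intro x hx; exact not_lt.mpr (by linarith [hex x hx])
    have hb0 : b = 0 := by
      rw [hb]; rw [Multiset.countP_eq_zero]
      intro x hx h; exact absurd h.1 (not_lt.mpr (by linarith [hex x hx]))
    have hc0 : c = 0 := by
      rw [hc]; rw [Multiset.countP_eq_zero]
      intro x hx h; exact absurd h.1 (not_lt.mpr (by linarith [hex x hx]))
    have hd0 : d = 0 := by
      rw [hd]; rw [Multiset.countP_eq_zero]
      intro x hx h; exact absurd h.1 (not_lt.mpr (by linarith [hex x hx]))
    rw [hW, ha0, hb0, hc0, hd0]
    norm_num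
    linarith
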